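/- Let φ be a proper partial (Δ+1)-edge-coloring and let xy be a (φ,αβ)-hopeful uncolored edge (not φ-happy, with both endpoints of degree < 2 in the αβ-colored subgraph). Let P(x,y,φ,αβ) be the chain consisting of xy followed by the edges of the αβ-alternating path component of y, traversed starting from y. Then P(x,y,φ,αβ) is φ-shiftable. -/

import Mathlib

open SimpleGraph

variable {V : Type*} [DecidableEq V]

/-- Two edges (as unordered pairs of vertices) are adjacent: distinct and sharing an endpoint. -/
def EdgeAdj (e f : Sym2 V) : Prop := e ≠ f ∧ ∃ v, v ∈ e ∧ v ∈ f

/-- A proper partial edge-coloring of `G` with colors `{1,…,Δ+1}` (as `Fin (Δ+1)`):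
its domain consists of edges of `G`, and adjacent colored edges get distinct colors. -/
def IsProperPartial (G : SimpleGraph V) (Δ : ℕ)
    (φ : Sym2 V → Option (Fin (Δ + 1))) : Prop :=
  (∀ e, (φ e).isSome → e ∈ G.edgeSet) ∧
  ∀ e f, EdgeAdj e f → (φ e).isSome → φ e ≠ φ f

/-- The set `M(φ,x)` of colors missing at `x`. -/
def missingColors (G : SimpleGraph V) (Δ : ℕ)
    (φ : Sym2 V → Option (Fin (Δ + 1))) (x : V) : Set (Fin (Δ + 1)) :=
  {c | ∀ y, G.Adj x y → φ s(x, y) ≠ some c}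

/-- `Shift φ e₀ e₁`: move the color of `e₁` to `e₀`, uncolor `e₁`, keep all else. -/
def Shift {α : Type*} (φ : Sym2 V → Option α) (e₀ e₁ : Sym2 V) :
    Sym2 V → Option α :=
  fun e => if e = e₀ then φ e₁ else if e = e₁ then none else φ e

/-- `(e₀, e₁)` is a `φ`-shiftable pair. -/
def ShiftablePair (G : SimpleGraph V) (Δ : ℕ) (φ : Sym2 V → Option (Fin (Δ + 1)))
    (e₀ e₁ : Sym2 V) : Prop :=
  EdgeAdj e₀ e₁ ∧ e₀ ∈ G.edgeSet ∧ φ e₀ = none ∧ (φ e₁).isSome ∧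
    IsProperPartial G Δ (Shift φ e₀ e₁)

/-- Shifting a coloring along a chain (list of edges). -/
def ShiftChain {α : Type*} : List (Sym2 V) → (Sym2 V → Option α) → (Sym2 V → Option α)
  | [], φ => φ
  | [_], φ => φ
  | e₀ :: e₁ :: rest, φ => ShiftChain (e₁ :: rest) (Shift φ e₀ e₁)

/-- A chain is `φ`-shiftable: each consecutive pair is shiftable w.r.t. the current coloring
(for a single-edge chain we require the edge to be an uncolored edge of `G`). -/
def ChainShiftable (G : SimpleGraph V) (Δ : ℕ) :
    List (Sym2 V) → (Sym2 V → Option (Fin (Δ + 1))) → Prop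
  | [], _ => True
  | [e], φ => φ e = none ∧ e ∈ G.edgeSet
  | e₀ :: e₁ :: rest, φ =>
      ShiftablePair G Δ φ e₀ e₁ ∧ ChainShiftable G Δ (e₁ :: rest) (Shift φ e₀ e₁)

/-- The spanning subgraph `G(φ, αβ)` of edges colored `α` or `β`. -/
def abSub (G : SimpleGraph V) (Δ : ℕ) (φ : Sym2 V → Option (Fin (Δ + 1)))
    (α β : Fin (Δ + 1)) : SimpleGraph V where
  Adj x y := G.Adj x y ∧ (φ s(x, y) = some α ∨ φ s(x, y) = some β)
  symm := by
    refine ⟨fun x y h => ?_⟩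
    refine ⟨h.1.symm, ?_⟩
    rw [Sym2.eq_swap]
    exact h.2
  loopless := ⟨fun x h => G.loopless.irrefl x h.1⟩

/-- A chain is `φ`-happy: it is `φ`-shiftable and its last edge is happy after shifting. -/
def ChainHappy (G : SimpleGraph V) (Δ : ℕ) (C : List (Sym2 V))
    (φ : Sym2 V → Option (Fin (Δ + 1))) : Prop :=
  ChainShiftable G Δ C φ ∧
    ∃ x y : V, C.getLast? = some s(x, y) ∧
      (missingColors G Δ (ShiftChain C φ) x ∩ missingColors G Δ (ShiftChain C φ) y).Nonempty


section Aux

variable {Δ : ℕ}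

lemma EdgeAdj.symm' {e f : Sym2 V} (h : EdgeAdj e f) : EdgeAdj f e :=
  ⟨h.1.symm, h.2.imp fun v hv => ⟨hv.2, hv.1⟩⟩

lemma Shift_e0 {α : Type*} (ψ : Sym2 V → Option α) (e₀ e₁ : Sym2 V) :
    Shift ψ e₀ e₁ e₀ = ψ e₁ := by simp [Shift]

lemma Shift_e1 {α : Type*} (ψ : Sym2 V → Option α) {e₀ e₁ : Sym2 V} (h : e₁ ≠ e₀) :
    Shift ψ e₀ e₁ e₁ = none := by simp [Shift, h]

lemma Shift_other {α : Type*} (ψ : Sym2 V → Option α) {e₀ e₁ f : Sym2 V}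
    (h0 : f ≠ e₀) (h1 : f ≠ e₁) : Shift ψ e₀ e₁ f = ψ f := by simp [Shift, h0, h1]

lemma two_le_ncard {s : Set V} (hs : s.Finite) {a b : V} (ha : a ∈ s) (hb : b ∈ s)
    (hab : a ≠ b) : 2 ≤ s.ncard := by
  have h := (Set.one_lt_ncard_iff hs).2 ⟨a, b, ha, hb, hab⟩
  omega

lemma abSub_edge_color {G : SimpleGraph V} {φ : Sym2 V → Option (Fin (Δ + 1))}
    {α β : Fin (Δ + 1)} {f : Sym2 V} (hf : f ∈ (abSub G Δ φ α β).edgeSet) :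
    φ f = some α ∨ φ f = some β := by
  induction f using Sym2.ind with
  | _ a b => exact ((abSub G Δ φ α β).mem_edgeSet.1 hf).2

lemma internal_two_nbrs {G' : SimpleGraph V} {x : V} {y z : V} (W : G'.Walk y z) :
    W.IsPath → x ∈ W.support → x ≠ y → x ≠ z →
      ∃ a b, a ≠ b ∧ G'.Adj x a ∧ G'.Adj x b := by
  induction W with
  | nil =>
    intro _ hx h1 _
    simp only [Walk.support_nil, List.mem_singleton] at hx
    exact absurd hx h1
  | @cons a b c h q ih =>
    intro hp hx h1 h2
    rw [Walk.support_cons] at hx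
    rcases List.mem_cons.1 hx with rfl | hx'
    · exact absurd rfl h1
    by_cases hxb : x = b
    · subst hxb
      cases q with
      | nil => exact absurd rfl h2
      | @cons _ d _ h' q' =>
        refine ⟨a, d, ?_, h.symm, h'⟩
        have hnd := hp.support_nodup
        rw [Walk.support_cons] at hnd
        have hna : a ∉ (Walk.cons h' q').support := (List.nodup_cons.1 hnd).1
        intro had
        apply hna
        rw [had, Walk.support_cons]
        exact List.mem_cons_of_mem _ q'.start_mem_support
    · exact ih hp.of_cons hx' hxb h2

lemma shift_proper (G : SimpleGraph V) (Δ : ℕ) (ψ : Sym2 V → Option (Fin (Δ + 1)))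
    (hψ : IsProperPartial G Δ ψ) (e₀ e₁ : Sym2 V) (he : e₀ ∈ G.edgeSet)
    (h0 : ψ e₀ = none) (h1 : (ψ e₁).isSome) (hne : e₀ ≠ e₁)
    (hcond : ∀ f, EdgeAdj f e₀ → f ≠ e₁ → ψ f ≠ ψ e₁) :
    IsProperPartial G Δ (Shift ψ e₀ e₁) := by
  constructor
  · intro e hs
    by_cases h : e = e₀
    · exact h ▸ he
    · by_cases h' : e = e₁
      · rw [h', Shift_e1 _ (Ne.symm hne)] at hs; simp at hs
      · exact hψ.1 e (by rwa [Shift_other ψ h h'] at hs)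
  · intro e f hef hs
    by_cases he0 : e = e₀
    · rw [he0, Shift_e0] at hs ⊢
      have hef' : EdgeAdj e₀ f := by rw [← he0]; exact hef
      by_cases hf1 : f = e₁
      · rw [hf1, Shift_e1 _ (Ne.symm hne)]
        intro hcon; rw [hcon] at hs; simp at hs
      · have hf0 : f ≠ e₀ := (hef'.1).symm
        rw [Shift_other ψ hf0 hf1]
        exact fun hcon => hcond f hef'.symm' hf1 hcon.symm
    · by_cases he1 : e = e₁
      · rw [he1, Shift_e1 _ (Ne.symm hne)] at hs; simp at hs
      · rw [Shift_other ψ he0 he1] at hs ⊢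
        by_cases hf0 : f = e₀
        · rw [hf0, Shift_e0]
          exact hcond e (by rw [← hf0]; exact hef) he1
        · by_cases hf1 : f = e₁
          · rw [hf1, Shift_e1 _ (Ne.symm hne)]
            intro hcon; rw [hcon] at hs; simp at hs
          · rw [Shift_other ψ hf0 hf1]
            exact hψ.2 e f hef hs

lemma key_chain (G : SimpleGraph V) (Δ : ℕ) (φ : Sym2 V → Option (Fin (Δ + 1)))
    (hφ : IsProperPartial G Δ φ) (α β : Fin (Δ + 1)) (z : V) :
    ∀ {v : V} (W : (abSub G Δ φ α β).Walk v z) (ψ : Sym2 V → Option (Fin (Δ + 1))) (u : V),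
      W.IsPath →
      IsProperPartial G Δ ψ →
      G.Adj u v →
      ψ s(u, v) = none →
      (∀ f ∈ W.edges, ψ f = φ f) →
      (∀ w', w' ∈ W.support → w' ≠ v → w' ≠ z → ∀ f, w' ∈ f →
          (ψ f = some α ∨ ψ f = some β) → φ f = ψ f) →
      (∀ f c, v ∈ f → W.edges.head? = some c → f ≠ c →
          ψ f ≠ some α ∧ ψ f ≠ some β) →
      (∀ f c, u ∈ f → W.edges.head? = some c → ψ f ≠ φ c) →
      (u ∈ W.support → u = z) →
      ChainShiftable G Δ (s(u, v) :: W.edges) ψ := by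
  intro v W
  induction W with
  | nil =>
    intro ψ u _ _ huv hnone _ _ _ _ _
    rw [Walk.edges_nil]
    exact ⟨hnone, G.mem_edgeSet.2 huv⟩
  | @cons v w z' h q ih =>
    intro ψ u hp hψ huv h0 hd hH he hg hU
    have hGvw : G.Adj v w := h.1
    have hφe1 : φ s(v, w) = some α ∨ φ s(v, w) = some β := h.2
    have hhead : (Walk.cons h q).edges.head? = some s(v, w) := by
      rw [Walk.edges_cons]; rfl
    have hψe1 : ψ s(v, w) = φ s(v, w) :=
      hd _ (by rw [Walk.edges_cons]; exact List.mem_cons_self)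
    have h1some : (ψ s(v, w)).isSome := by
      rw [hψe1]; rcases hφe1 with hh | hh <;> simp [hh]
    have hne01 : s(u, v) ≠ s(v, w) := by
      intro hcon; rw [← hcon, h0] at h1some; simp at h1some
    have huw : u ≠ w := fun hcon => hne01 (by rw [hcon, Sym2.eq_swap])
    have hvw : v ≠ w := h.ne
    have hvm0 : v ∈ s(u, v) := Sym2.mem_iff.2 (Or.inr rfl)
    have hvm1 : v ∈ s(v, w) := Sym2.mem_iff.2 (Or.inl rfl)
    have hwm1 : w ∈ s(v, w) := Sym2.mem_iff.2 (Or.inr rfl)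
    have hcond : ∀ f, EdgeAdj f s(u, v) → f ≠ s(v, w) → ψ f ≠ ψ s(v, w) := by
      rintro f ⟨hfne, t, htf, hte0⟩ hf1
      rw [hψe1]
      rcases Sym2.mem_iff.1 hte0 with h' | h'
      · exact hg f s(v, w) (h' ▸ htf) hhead
      · intro hcon
        have hab2 := he f s(v, w) (h' ▸ htf) hhead hf1
        rcases hφe1 with hh | hh <;> rw [hh] at hcon
        · exact hab2.1 hcon
        · exact hab2.2 hcon
    have hproper' : IsProperPartial G Δ (Shift ψ s(u, v) s(v, w)) :=
      shift_proper G Δ ψ hψ _ _ (G.mem_edgeSet.2 huv) h0 h1some hne01 hcond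
    have hpair : ShiftablePair G Δ ψ s(u, v) s(v, w) :=
      ⟨⟨hne01, v, hvm0, hvm1⟩, G.mem_edgeSet.2 huv, h0, h1some, hproper'⟩
    -- facts about the path
    have hq : q.IsPath := hp.of_cons
    have hvnq : v ∉ q.support := by
      have hnd := hp.support_nodup
      rw [Walk.support_cons] at hnd
      exact (List.nodup_cons.1 hnd).1
    have he1nq : s(v, w) ∉ q.edges := by
      have hnd := hp.isTrail.edges_nodup
      rw [Walk.edges_cons] at hnd
      exact (List.nodup_cons.1 hnd).1
    have hd' : ∀ f ∈ q.edges, Shift ψ s(u, v) s(v, w) f = φ f := by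
      intro f hf
      have hf1 : f ≠ s(v, w) := fun hcon => he1nq (hcon ▸ hf)
      have hfcol := abSub_edge_color (q.edges_subset_edgeSet hf)
      have hf0 : f ≠ s(u, v) := by
        intro hcon
        have := hd f (by rw [Walk.edges_cons]; exact List.mem_cons_of_mem _ hf)
        rw [hcon, h0] at this
        rcases hfcol with hh | hh <;> rw [hcon] at hh <;> rw [hh] at this <;> simp at this
      rw [Shift_other ψ hf0 hf1]
      exact hd f (by rw [Walk.edges_cons]; exact List.mem_cons_of_mem _ hf)
    refine ⟨hpair, ?_⟩
    apply ih (Shift ψ s(u, v) s(v, w)) v hq hproper' hGvw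
      (Shift_e1 _ (Ne.symm hne01)) hd'
    -- (H')
    · intro w' hw' hww hwz f hwf hcol
      by_cases hf0 : f = s(u, v)
      · subst hf0
        exfalso
        rcases Sym2.mem_iff.1 hwf with rfl | rfl
        · exact hwz (hU (by rw [Walk.support_cons]; exact List.mem_cons_of_mem _ hw'))
        · exact hvnq hw'
      · by_cases hf1 : f = s(v, w)
        · rw [hf1, Shift_e1 _ (Ne.symm hne01)] at hcol
          rcases hcol with hh | hh <;> simp at hh
        · rw [Shift_other ψ hf0 hf1] at hcol ⊢
          exact hH w' (by rw [Walk.support_cons]; exact List.mem_cons_of_mem _ hw')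
            (fun hcon => hvnq (hcon ▸ hw')) hwz f hwf hcol
    -- (e')
    · intro f c hwf hc hfc
      cases q with
      | nil => rw [Walk.edges_nil] at hc; simp at hc
      | @cons _ w₂ _ h' q' =>
        rw [Walk.edges_cons] at hc
        have hceq : c = s(w, w₂) := by simpa using hc.symm
        subst hceq
        have hf0 : f ≠ s(u, v) := by
          intro hcon
          rw [hcon] at hwf
          rcases Sym2.mem_iff.1 hwf with rfl | rfl
          · exact huw rfl
          · exact hvw rfl
        by_cases hf1 : f = s(v, w)
        · rw [hf1, Shift_e1 _ (Ne.symm hne01)]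
          exact ⟨by simp, by simp⟩
        · rw [Shift_other ψ hf0 hf1]
          suffices hsuf : ¬(ψ f = some α ∨ ψ f = some β) by
            exact ⟨fun hh => hsuf (Or.inl hh), fun hh => hsuf (Or.inr hh)⟩
          intro hcol
          have hwmem : w ∈ (Walk.cons h (Walk.cons h' q')).support := by
            rw [Walk.support_cons]
            exact List.mem_cons_of_mem _ (Walk.start_mem_support _)
          have hwz : w ≠ z' := by
            intro hcon
            have hnd := hq.support_nodup
            rw [Walk.support_cons] at hnd
            exact (List.nodup_cons.1 hnd).1 (by rw [hcon]; exact q'.end_mem_support)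
          have hφf : φ f = ψ f := hH w hwmem (Ne.symm hvw) hwz f hwf hcol
          have hfs : (φ f).isSome := by rw [hφf]; rcases hcol with hh | hh <;> simp [hh]
          have hwmc : w ∈ s(w, w₂) := Sym2.mem_iff.2 (Or.inl rfl)
          have hcmem : s(w, w₂) ∈ (Walk.cons h' q').edges := by
            rw [Walk.edges_cons]; exact List.mem_cons_self
          have he1c : s(v, w) ≠ s(w, w₂) := fun hcon => he1nq (hcon ▸ hcmem)
          have hne_fe1 : φ f ≠ φ s(v, w) := hφ.2 f s(v, w) ⟨hf1, w, hwf, hwm1⟩ hfs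
          have hne_fc : φ f ≠ φ s(w, w₂) := hφ.2 f s(w, w₂) ⟨hfc, w, hwf, hwmc⟩ hfs
          have hce1 : φ s(v, w) ≠ φ s(w, w₂) := by
            apply hφ.2 s(v, w) s(w, w₂) ⟨he1c, w, hwm1, hwmc⟩
            rcases hφe1 with hh | hh <;> simp [hh]
          have hφfv : φ f = some α ∨ φ f = some β := by rw [hφf]; exact hcol
          rcases hφfv with h1 | h1
          · rcases hφe1 with h2 | h2
            · exact hne_fe1 (h1.trans h2.symm)
            · rcases h'.2 with h3 | h3
              · exact hne_fc (h1.trans h3.symm)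
              · exact hce1 (h2.trans h3.symm)
          · rcases hφe1 with h2 | h2
            · rcases h'.2 with h3 | h3
              · exact hce1 (h2.trans h3.symm)
              · exact hne_fc (h1.trans h3.symm)
            · exact hne_fe1 (h1.trans h2.symm)
    -- (g')
    · intro f c hvf hc
      cases q with
      | nil => rw [Walk.edges_nil] at hc; simp at hc
      | @cons _ w₂ _ h' q' =>
        rw [Walk.edges_cons] at hc
        have hceq : c = s(w, w₂) := by simpa using hc.symm
        subst hceq
        have hwmc : w ∈ s(w, w₂) := Sym2.mem_iff.2 (Or.inl rfl)
        have hcmem : s(w, w₂) ∈ (Walk.cons h' q').edges := by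
          rw [Walk.edges_cons]; exact List.mem_cons_self
        have he1c : s(v, w) ≠ s(w, w₂) := fun hcon => he1nq (hcon ▸ hcmem)
        have hce1 : φ s(v, w) ≠ φ s(w, w₂) := by
          apply hφ.2 s(v, w) s(w, w₂) ⟨he1c, w, hwm1, hwmc⟩
          rcases hφe1 with hh | hh <;> simp [hh]
        by_cases hf0 : f = s(u, v)
        · rw [hf0, Shift_e0, hψe1]
          exact hce1
        · by_cases hf1 : f = s(v, w)
          · rw [hf1, Shift_e1 _ (Ne.symm hne01)]
            rcases h'.2 with h3 | h3 <;> simp [h3]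
          · rw [Shift_other ψ hf0 hf1]
            have hab2 := he f s(v, w) hvf hhead hf1
            rcases h'.2 with h3 | h3 <;> rw [h3]
            · exact hab2.1
            · exact hab2.2
    -- (U')
    · intro hcon
      exact absurd hcon hvnq

end Aux

/-- for a `(φ,αβ)`-hopeful uncolored edge `xy` (not `φ`-happy, both endpoints
of degree `< 2` in the `αβ`-subgraph), the chain `P(x,y,φ,αβ)` consisting of `xy` followed
by the maximal `αβ`-alternating path starting at `y` is `φ`-shiftable. -/
theorem alternating_chain_shiftable [Fintype V] (G : SimpleGraph V) (Δ : ℕ)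
    (φ : Sym2 V → Option (Fin (Δ + 1))) (hφ : IsProperPartial G Δ φ)
    (α β : Fin (Δ + 1)) (hab : α ≠ β) (x y z : V) (hadj : G.Adj x y)
    (hunc : φ s(x, y) = none)
    (hnothappy : missingColors G Δ φ x ∩ missingColors G Δ φ y = ∅)
    (hx : ((abSub G Δ φ α β).neighborSet x).ncard < 2)
    (hy : ((abSub G Δ φ α β).neighborSet y).ncard < 2)
    (W : (abSub G Δ φ α β).Walk y z) (hWp : W.IsPath)
    (hWmax : ∀ w, (abSub G Δ φ α β).Adj z w → s(z, w) ∈ W.edges) :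
    ChainShiftable G Δ (s(x, y) :: W.edges) φ := by
  clear hWmax
  revert hWp
  cases W with
  | nil =>
    intro _
    rw [Walk.edges_nil]
    exact ⟨hunc, G.mem_edgeSet.2 hadj⟩
  | @cons _ v₁ _ h q =>
    intro hWp
    refine key_chain G Δ φ hφ α β z (Walk.cons h q) φ x hWp hφ hadj hunc
      (fun f _ => rfl) (fun _ _ _ _ f _ _ => rfl) ?_ ?_ ?_
    -- (e) : no αβ-edge at y other than the first walk edge
    · intro f c hyf hc hfc
      rw [Walk.edges_cons] at hc
      have hceq : c = s(y, v₁) := by simpa using hc.symm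
      subst hceq
      suffices hsuf : ¬(φ f = some α ∨ φ f = some β) by
        exact ⟨fun hh => hsuf (Or.inl hh), fun hh => hsuf (Or.inr hh)⟩
      intro hcol
      have hfs : (φ f).isSome := by rcases hcol with hh | hh <;> simp [hh]
      obtain ⟨b, rfl⟩ := Sym2.mem_iff_exists.1 hyf
      have hGyb : G.Adj y b := G.mem_edgeSet.1 (hφ.1 _ hfs)
      have hA : b ∈ (abSub G Δ φ α β).neighborSet y := ⟨hGyb, hcol⟩
      have hA1 : v₁ ∈ (abSub G Δ φ α β).neighborSet y := h
      have hbv : b ≠ v₁ := fun hcon => hfc (by rw [hcon])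
      have := two_le_ncard (Set.toFinite _) hA hA1 hbv
      omega
    -- (g) : no edge at x with the color of the first walk edge
    · intro f c hxf hc
      rw [Walk.edges_cons] at hc
      have hceq : c = s(y, v₁) := by simpa using hc.symm
      subst hceq
      intro hcon
      obtain ⟨a, rfl⟩ := Sym2.mem_iff_exists.1 hxf
      have hfs : (φ s(x, a)).isSome := by
        rw [hcon]; rcases h.2 with hh | hh <;> simp [hh]
      have hGxa : G.Adj x a := G.mem_edgeSet.1 (hφ.1 _ hfs)
      have hA1 : v₁ ∈ (abSub G Δ φ α β).neighborSet y := h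
      rcases h.2 with hγ | hγ
      · -- first edge colored α; show β missing at x and at y
        have hδx : β ∈ missingColors G Δ φ x := by
          intro b hGxb hcolb
          have hAa : a ∈ (abSub G Δ φ α β).neighborSet x :=
            ⟨hGxa, Or.inl (by rw [hcon, hγ])⟩
          have hAb : b ∈ (abSub G Δ φ α β).neighborSet x := ⟨hGxb, Or.inr hcolb⟩
          have hab2 : a ≠ b := by
            intro hcon2; rw [hcon2, hcolb] at hcon; rw [hγ] at hcon
            exact hab (by injection hcon.symm)
          have := two_le_ncard (Set.toFinite _) hAa hAb hab2
          omega
        have hδy : β ∈ missingColors G Δ φ y := by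
          intro b hGyb hcolb
          have hAb : b ∈ (abSub G Δ φ α β).neighborSet y := ⟨hGyb, Or.inr hcolb⟩
          have hbv : b ≠ v₁ := by
            intro hcon2; rw [hcon2] at hcolb; rw [hcolb] at hγ
            exact hab (by injection hγ.symm)
          have := two_le_ncard (Set.toFinite _) hAb hA1 hbv
          omega
        exact (Set.eq_empty_iff_forall_notMem.1 hnothappy β) ⟨hδx, hδy⟩
      · -- first edge colored β; show α missing at x and at y
        have hδx : α ∈ missingColors G Δ φ x := by
          intro b hGxb hcolb
          have hAa : a ∈ (abSub G Δ φ α β).neighborSet x :=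
            ⟨hGxa, Or.inr (by rw [hcon, hγ])⟩
          have hAb : b ∈ (abSub G Δ φ α β).neighborSet x := ⟨hGxb, Or.inl hcolb⟩
          have hab2 : a ≠ b := by
            intro hcon2; rw [hcon2, hcolb] at hcon; rw [hγ] at hcon
            exact hab (by injection hcon)
          have := two_le_ncard (Set.toFinite _) hAa hAb hab2
          omega
        have hδy : α ∈ missingColors G Δ φ y := by
          intro b hGyb hcolb
          have hAb : b ∈ (abSub G Δ φ α β).neighborSet y := ⟨hGyb, Or.inl hcolb⟩
          have hbv : b ≠ v₁ := by
            intro hcon2; rw [hcon2] at hcolb; rw [hcolb] at hγ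
            exact hab (by injection hγ)
          have := two_le_ncard (Set.toFinite _) hAb hA1 hbv
          omega
        exact (Set.eq_empty_iff_forall_notMem.1 hnothappy α) ⟨hδx, hδy⟩
    -- (U) : x on the walk implies x = z
    · intro hxsup
      by_contra hxz
      obtain ⟨a, b, hab2, ha, hb⟩ :=
        internal_two_nbrs (Walk.cons h q) hWp hxsup hadj.ne hxz
      have := two_le_ncard (Set.toFinite _)
        (show a ∈ (abSub G Δ φ α β).neighborSet x from ha)
        (show b ∈ (abSub G Δ φ α β).neighborSet x from hb) hab2
      omega
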